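/- Let c ∈ G with ℓ_A(c) = n and Red_A(c) finite. If the factorization poset P_c is chain-connected and locally Hurwitz-connected, then the braid group B_n acts transitively on Red_A(c) (P_c is Hurwitz-connected). -/

import Mathlib

variable {G : Type*} [Group G]

/-- `A` generates `G` as a monoid. -/
def GeneratesM (A : Set G) : Prop :=
  ∀ x : G, ∃ l : List G, (∀ a ∈ l, a ∈ A) ∧ l.prod = x

/-- `A` is closed under `G`-conjugation. -/
def ConjClosed (A : Set G) : Prop :=
  ∀ g a : G, a ∈ A → g * a * g⁻¹ ∈ A

/-- The `A`-length of `x`: minimal number of factors from `A` needed to write `x`. -/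
noncomputable def lenA (A : Set G) (x : G) : ℕ :=
  sInf {n : ℕ | ∃ l : List G, (∀ a ∈ l, a ∈ A) ∧ l.prod = x ∧ l.length = n}

/-- The `A`-prefix order. -/
def leA (A : Set G) (x y : G) : Prop :=
  lenA A x + lenA A (x⁻¹ * y) = lenA A y

/-- The set of reduced `A`-factorizations of `x`, as lists. -/
def RedA (A : Set G) (x : G) : Set (List G) :=
  {l : List G | (∀ a ∈ l, a ∈ A) ∧ l.prod = x ∧ l.length = lenA A x}

/-- `A_c`: the generators occurring below `c`. -/
def Ac (A : Set G) (c : G) : Set G := {a : G | a ∈ A ∧ leA A a c}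

/-- A single Hurwitz move on factorizations. -/
def HurwitzMove : List G → List G → Prop := fun l m =>
  ∃ (p s : List G) (a b : G),
    l = p ++ a :: b :: s ∧ m = p ++ b :: (b⁻¹ * a * b) :: s

/-- `r` is a linear order on the set `S`. -/
def IsLinearOrderOn (S : Set G) (r : G → G → Prop) : Prop :=
  (∀ a ∈ S, r a a) ∧
  (∀ a ∈ S, ∀ b ∈ S, r a b → r b a → a = b) ∧
  (∀ a ∈ S, ∀ b ∈ S, ∀ c ∈ S, r a b → r b c → r a c) ∧
  (∀ a ∈ S, ∀ b ∈ S, r a b ∨ r b a)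

/-- `r` is a `c`-compatible order: every length-2 element below `c` has a unique
rising reduced factorization. -/
def CompatibleOrder (A : Set G) (c : G) (r : G → G → Prop) : Prop :=
  ∀ g : G, leA A g c → lenA A g = 2 →
    ∃! l : List G, l ∈ RedA A g ∧ l.Chain' r

/-- Two factorizations correspond to maximal chains differing in exactly one element. -/
def ChainAdj (l m : List G) : Prop :=
  l ≠ m ∧ ∃ (p s : List G) (a b a' b' : G),
    l = p ++ a :: b :: s ∧ m = p ++ a' :: b' :: s ∧ a * b = a' * b'

/-- Covering relation in the graded factorization poset. -/
def CoversA (A : Set G) (x y : G) : Prop := leA A x y ∧ lenA A y = lenA A x + 1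

/-- `F_≺(a; g)`: upper covers of the atom `a` in `P_g` that also cover a strictly
smaller atom. -/
def Fset (A : Set G) (r : G → G → Prop) (a g : G) : Set G :=
  {h : G | CoversA A a h ∧ leA A h g ∧
    ∃ a' ∈ A, a' ≠ a ∧ r a' a ∧ CoversA A a' h}

/-- `P_c` is well-covered with respect to `r`. -/
def WellCovered (A : Set G) (c : G) (r : G → G → Prop) : Prop :=
  ∀ a ∈ A, leA A a c →
    (Fset A r a c = ∅ ↔ ∀ b ∈ A, leA A b c → r a b)

/-- `P_c` is totally well-covered with respect to `r`. -/
def TotallyWellCovered (A : Set G) (c : G) (r : G → G → Prop) : Prop :=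
  ∀ g : G, leA A g c → WellCovered A g r

lemma lenA_le_length (A : Set G) (l : List G) (h : ∀ a ∈ l, a ∈ A) :
    lenA A l.prod ≤ l.length :=
  Nat.sInf_le ⟨l, h, rfl, rfl⟩

lemma lenA_exists (A : Set G) (hgen : GeneratesM A) (x : G) :
    ∃ l : List G, (∀ a ∈ l, a ∈ A) ∧ l.prod = x ∧ l.length = lenA A x := by
  obtain ⟨l, hl, hp⟩ := hgen x
  have hne : {n : ℕ | ∃ l : List G, (∀ a ∈ l, a ∈ A) ∧ l.prod = x ∧ l.length = n}.Nonempty :=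
    ⟨l.length, l, hl, hp, rfl⟩
  exact Nat.sInf_mem hne

lemma lenA_mul_le (A : Set G) (hgen : GeneratesM A) (x y : G) :
    lenA A (x * y) ≤ lenA A x + lenA A y := by
  obtain ⟨lx, hlx, hpx, hnx⟩ := lenA_exists A hgen x
  obtain ⟨ly, hly, hpy, hny⟩ := lenA_exists A hgen y
  have := lenA_le_length A (lx ++ ly) (by
    intro a ha
    rcases List.mem_append.1 ha with h | h
    · exact hlx a h
    · exact hly a h)
  simpa [hpx, hpy, hnx, hny] using this

lemma conj_prod (g : G) (p : List G) :
    (p.map fun x => g * x * g⁻¹).prod = g * p.prod * g⁻¹ := by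
  induction p with
  | nil => simp
  | cons h t ih => simp only [List.map_cons, List.prod_cons, ih]; group

lemma hurwitz_lift (p s : List G) {u v : List G} (h : HurwitzMove u v) :
    HurwitzMove (p ++ u ++ s) (p ++ v ++ s) := by
  obtain ⟨q, t, a, b, hu, hv⟩ := h
  exact ⟨p ++ q, t ++ s, a, b, by simp [hu], by simp [hv]⟩

lemma eqvgen_lift (p s : List G) {u v : List G}
    (h : Relation.EqvGen HurwitzMove u v) :
    Relation.EqvGen HurwitzMove (p ++ u ++ s) (p ++ v ++ s) := by
  induction h with
  | rel x y h => exact .rel _ _ (hurwitz_lift p s h)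
  | refl x => exact .refl _
  | symm x y _ ih => exact .symm _ _ ih
  | trans x y z _ _ ih1 ih2 => exact .trans _ _ _ ih1 ih2

theorem hurwitz_transitive_of_chain_connected_locally_hurwitz (A : Set G)
    (hgen : GeneratesM A) (hconj : ConjClosed A) (c : G) (n : ℕ)
    (hn : lenA A c = n) (hfin : (RedA A c).Finite)
    (hchain : ∀ l ∈ RedA A c, ∀ m ∈ RedA A c,
      Relation.ReflTransGen
        (fun u v : List G => u ∈ RedA A c ∧ v ∈ RedA A c ∧ ChainAdj u v) l m)
    (hloc : ∀ g : G, leA A g c → lenA A g = 2 →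
      ∀ l ∈ RedA A g, ∀ m ∈ RedA A g, Relation.EqvGen HurwitzMove l m) :
    ∀ l ∈ RedA A c, ∀ m ∈ RedA A c, Relation.EqvGen HurwitzMove l m := by
  -- First: a single chain-adjacency step between reduced factorizations
  -- yields Hurwitz equivalence.
  have key : ∀ u v : List G, u ∈ RedA A c → v ∈ RedA A c → ChainAdj u v →
      Relation.EqvGen HurwitzMove u v := by
    intro u v hu hv hadj
    obtain ⟨-, p, s, a, b, a', b', hu', hv', hab⟩ := hadj
    obtain ⟨huA, hup, hulen⟩ := hu
    obtain ⟨hvA, hvp, hvlen⟩ := hv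
    set g : G := a * b with hg
    have haA : a ∈ A := huA a (by simp [hu'])
    have hbA : b ∈ A := huA b (by simp [hu'])
    have ha'A : a' ∈ A := hvA a' (by simp [hv'])
    have hb'A : b' ∈ A := hvA b' (by simp [hv'])
    -- lenA g ≤ 2
    have hg2 : lenA A g ≤ 2 := by
      have := lenA_le_length A [a, b] (by
        intro x hx; simp only [List.mem_cons, List.not_mem_nil, or_false] at hx
        rcases hx with rfl | rfl
        · exact haA
        · exact hbA)
      simpa [hg] using this
    -- lenA (g⁻¹ * c) ≤ p.length + s.length
    have hcprod : c = p.prod * (a * (b * s.prod)) := by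
      rw [← hup, hu']; simp
    have hrest : lenA A (g⁻¹ * c) ≤ p.length + s.length := by
      have hmem : ∀ x ∈ (p.map fun x => g⁻¹ * x * g⁻¹⁻¹) ++ s, x ∈ A := by
        intro x hx
        rcases List.mem_append.1 hx with h | h
        · obtain ⟨y, hy, rfl⟩ := List.mem_map.1 h
          exact hconj g⁻¹ y (huA y (by simp [hu', hy]))
        · exact huA x (by simp [hu', h])
      have := lenA_le_length A ((p.map fun x => g⁻¹ * x * g⁻¹⁻¹) ++ s) hmem
      have hprodeq : ((p.map fun x => g⁻¹ * x * g⁻¹⁻¹).prod) * s.prod = g⁻¹ * c := by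
        rw [conj_prod, hcprod, hg]; group
      calc lenA A (g⁻¹ * c) = lenA A (((p.map fun x => g⁻¹ * x * g⁻¹⁻¹) ++ s).prod) := by
            rw [List.prod_append, hprodeq]
        _ ≤ _ := this
        _ = p.length + s.length := by simp
    -- length bookkeeping
    have hclen : lenA A c = p.length + 2 + s.length := by
      rw [← hulen, hu']; simp; omega
    have hsub : lenA A c ≤ lenA A g + lenA A (g⁻¹ * c) := by
      have := lenA_mul_le A hgen g (g⁻¹ * c)
      simpa using this
    have hleA : leA A g c := by
      unfold leA; omega
    have hglen : lenA A g = 2 := by omega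
    -- the two short factorizations are reduced factorizations of g
    have hab1 : [a, b] ∈ RedA A g := by
      refine ⟨?_, by simp [hg], by simp [hglen]⟩
      intro x hx; simp only [List.mem_cons, List.not_mem_nil, or_false] at hx
      rcases hx with rfl | rfl
      · exact haA
      · exact hbA
    have hab2 : [a', b'] ∈ RedA A g := by
      refine ⟨?_, by simpa using hab.symm, by simp [hglen]⟩
      intro x hx; simp only [List.mem_cons, List.not_mem_nil, or_false] at hx
      rcases hx with rfl | rfl
      · exact ha'A
      · exact hb'A
    have hloc' := hloc g hleA hglen [a, b] hab1 [a', b'] hab2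
    have := eqvgen_lift p s hloc'
    have heq1 : p ++ [a, b] ++ s = u := by rw [hu']; simp
    have heq2 : p ++ [a', b'] ++ s = v := by rw [hv']; simp
    rwa [heq1, heq2] at this
  have main : ∀ x y : List G,
      Relation.ReflTransGen
        (fun u v : List G => u ∈ RedA A c ∧ v ∈ RedA A c ∧ ChainAdj u v) x y →
      Relation.EqvGen HurwitzMove x y := by
    intro x y h
    induction h with
    | refl => exact .refl _
    | tail _ hstep ih =>
      exact .trans _ _ _ ih (key _ _ hstep.1 hstep.2.1 hstep.2.2)
  intro l hl m hm
  exact main l m (hchain l hl m hm)
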